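/- Let t be a nonnegative form on a complex vector space X and let w be a nonnegative form with w ≤ t. Then w[x] = sup_{n∈ℕ} inf_{y∈X} (t[x−y] + n·w[y]) holds for all x ∈ X (i.e. D_w t = w, w is a t-quasi-unit) if and only if w is an extreme point of the convex set [0,t] (inside the complex vector space of sesquilinear forms on X, regarded as a real vector space). -/

import Mathlib

open scoped ComplexOrder

/-- A sesquilinear form (linear in the first, conjugate-linear in the second variable)
`t : X →ₗ[ℂ] X →ₗ⋆[ℂ] ℂ` is nonnegative if `t(x,x) ≥ 0` for all `x`. -/
def IsNNForm {X : Type*} [AddCommGroup X] [Module ℂ X]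
    (t : X →ₗ[ℂ] X →ₗ⋆[ℂ] ℂ) : Prop :=
  ∀ x : X, 0 ≤ t x x

/-- The quadratic form of a form: `t[x] = t(x,x)`, viewed as a real number. -/
def FQ {X : Type*} [AddCommGroup X] [Module ℂ X]
    (t : X →ₗ[ℂ] X →ₗ⋆[ℂ] ℂ) (x : X) : ℝ :=
  (t x x).re

/-- The order on forms: `t ≤ w` iff `t[x] ≤ w[x]` for all `x`. -/
def FLe {X : Type*} [AddCommGroup X] [Module ℂ X]
    (t w : X →ₗ[ℂ] X →ₗ⋆[ℂ] ℂ) : Prop :=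
  ∀ x : X, FQ t x ≤ FQ w x

/-- `t` and `w` are singular: the only nonnegative form below both is the zero form. -/
def SingForm {X : Type*} [AddCommGroup X] [Module ℂ X]
    (t w : X →ₗ[ℂ] X →ₗ⋆[ℂ] ℂ) : Prop :=
  ∀ s : X →ₗ[ℂ] X →ₗ⋆[ℂ] ℂ, IsNNForm s → FLe s t → FLe s w → s = 0

section basic
variable {X : Type*} [AddCommGroup X] [Module ℂ X]

lemma FQ_nonneg {s : X →ₗ[ℂ] X →ₗ⋆[ℂ] ℂ} (hs : IsNNForm s) (x : X) : 0 ≤ FQ s x := by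
  have := hs x
  rw [Complex.le_def] at this
  simpa [FQ] using this.1

lemma diag_eq_FQ {s : X →ₗ[ℂ] X →ₗ⋆[ℂ] ℂ} (hs : IsNNForm s) (x : X) :
    s x x = ((FQ s x : ℝ) : ℂ) := by
  have := hs x
  rw [Complex.le_def] at this
  apply Complex.ext <;> simp [FQ, ← this.2]

lemma FQ_zero (s : X →ₗ[ℂ] X →ₗ⋆[ℂ] ℂ) : FQ s 0 = 0 := by
  simp [FQ]


lemma FQ_smul_vec (s : X →ₗ[ℂ] X →ₗ⋆[ℂ] ℂ) (c : ℂ) (x : X) :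
    FQ s (c • x) = ‖c‖ ^ 2 * FQ s x := by
  simp only [FQ, map_smul, LinearMap.smul_apply, LinearMap.map_smulₛₗ, smul_eq_mul]
  rw [show (starRingEnd ℂ) c * (c * s x x) = (c * starRingEnd ℂ c) * s x x by ring,
    Complex.mul_conj, Complex.re_ofReal_mul]
  congr 1
  rw [Complex.normSq_eq_norm_sq]

lemma FQ_parallelogram (s : X →ₗ[ℂ] X →ₗ⋆[ℂ] ℂ) (x y : X) :
    FQ s (x + y) + FQ s (x - y) = 2 * FQ s x + 2 * FQ s y := by
  simp only [FQ, map_add, map_sub, LinearMap.add_apply, LinearMap.sub_apply,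
    Complex.add_re, Complex.sub_re]
  ring

lemma FQ_add_expand (s : X →ₗ[ℂ] X →ₗ⋆[ℂ] ℂ) (x y : X) :
    FQ s (x + y) = FQ s x + FQ s y + (s x y + s y x).re := by
  simp only [FQ, map_add, LinearMap.add_apply, Complex.add_re]
  ring

lemma FQ_real_comb (s : X →ₗ[ℂ] X →ₗ⋆[ℂ] ℂ) (a b : ℝ) (x y : X) :
    FQ s ((a : ℂ) • x - (b : ℂ) • y)
      = a ^ 2 * FQ s x + b ^ 2 * FQ s y - a * b * (s x y + s y x).re := by
  simp only [FQ, map_sub, map_smul, LinearMap.sub_apply, LinearMap.smul_apply,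
    LinearMap.map_smulₛₗ, Complex.conj_ofReal, smul_eq_mul, Complex.sub_re, Complex.add_re,
    Complex.re_ofReal_mul]
  ring

/-- cross-term bound from nonnegativity. -/
lemma cross_bound {s : X →ₗ[ℂ] X →ₗ⋆[ℂ] ℂ} (hs : IsNNForm s) (x y : X)
    {c : ℝ} (hc : 0 < c) : (s x y + s y x).re ≤ c * FQ s x + c⁻¹ * FQ s y := by
  have h := FQ_nonneg hs ((Real.sqrt c : ℂ) • x - (((Real.sqrt c)⁻¹ : ℝ) : ℂ) • y)
  rw [FQ_real_comb] at h
  have hsc : (0:ℝ) < Real.sqrt c := Real.sqrt_pos.2 hc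
  have h1 : Real.sqrt c ^ 2 = c := Real.sq_sqrt hc.le
  have h2 : ((Real.sqrt c)⁻¹) ^ 2 = c⁻¹ := by rw [inv_pow, h1]
  have h3 : Real.sqrt c * (Real.sqrt c)⁻¹ = 1 := mul_inv_cancel₀ hsc.ne'
  rw [h1, h2, h3, one_mul] at h
  linarith

/-- `w[x+y] ≤ (1+ε)w[x] + (1+1/ε)w[y]`. -/
lemma FQ_add_le {s : X →ₗ[ℂ] X →ₗ⋆[ℂ] ℂ} (hs : IsNNForm s) (x y : X)
    {c : ℝ} (hc : 0 < c) :
    FQ s (x + y) ≤ (1 + c) * FQ s x + (1 + c⁻¹) * FQ s y := by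
  have := cross_bound hs x y hc
  have := FQ_add_expand s x y
  linarith

/-- A form vanishing on the diagonal is zero. -/
lemma form_eq_zero_of_diag {s : X →ₗ[ℂ] X →ₗ⋆[ℂ] ℂ} (h : ∀ x, s x x = 0) : s = 0 := by
  have key : ∀ x y : X, s x y = 0 := by
    intro x y
    have h1 := h (x + y)
    have h2 := h (x + Complex.I • y)
    simp only [map_add, map_smul, LinearMap.add_apply, LinearMap.smul_apply,
      LinearMap.map_smulₛₗ, smul_eq_mul, h, Complex.conj_I] at h1 h2
    have e1 : s x y + s y x = 0 := by linear_combination h1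
    have hI : Complex.I ^ 2 = -1 := Complex.I_sq
    have e2 : s y x - s x y = 0 := by
      linear_combination (-Complex.I) * h2 + (s y x - s x y) * hI
    linear_combination (e1 - e2) / 2
  apply LinearMap.ext; intro x; apply LinearMap.ext; intro y
  simp [key x y]

end basic

section construction
variable {X : Type*} [AddCommGroup X] [Module ℂ X]

lemma exists_form_of_quadratic (q : X → ℝ) (h0 : ∀ x, 0 ≤ q x)
    (hs : ∀ (c : ℂ) (x : X), q (c • x) = ‖c‖ ^ 2 * q x)
    (hp : ∀ x y : X, q (x + y) + q (x - y) = 2 * q x + 2 * q y) :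
    ∃ p : X →ₗ[ℂ] X →ₗ⋆[ℂ] ℂ, ∀ x : X, p x x = ((q x : ℝ) : ℂ) := by
  have q0 : q 0 = 0 := by
    have := hs 0 0
    simpa using this
  have qneg : ∀ x : X, q (-x) = q x := by
    intro x
    have := hs (-1) x
    simpa using this
  set Br : X → X → ℝ := fun x z => (q (x + z) - q (x - z)) / 4 with hBr
  have br_symm : ∀ x z, Br x z = Br z x := by
    intro x z
    simp only [hBr]
    rw [add_comm, ← neg_sub z x, qneg]
  have br_self : ∀ x, Br x x = q x := by
    intro x
    have h2 : q (x + x) = 4 * q x := by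
      have h := hs 2 x
      rw [two_smul] at h
      rw [h]
      norm_num
    simp only [hBr]
    rw [sub_self, q0, h2]
    ring
  have br_zero : ∀ z, Br 0 z = 0 := by
    intro z
    simp only [hBr]
    rw [zero_add, zero_sub, qneg]
    ring
  have key : ∀ x y z, Br x z + Br y z = 2 * Br ((2:ℂ)⁻¹ • (x + y)) z := by
    intro x y z
    set m := (2:ℂ)⁻¹ • (x + y) with hm
    set d := (2:ℂ)⁻¹ • (x - y) with hd
    have hmd1 : m + d = x := by rw [hm, hd]; module
    have hmd2 : m - d = y := by rw [hm, hd]; module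
    have e1 := hp (m + z) d
    have e2 := hp (m - z) d
    rw [show m + z + d = x + z by rw [← hmd1]; abel,
       show m + z - d = y + z by rw [← hmd2]; abel] at e1
    rw [show m - z + d = x - z by rw [← hmd1]; abel,
       show m - z - d = y - z by rw [← hmd2]; abel] at e2
    simp only [hBr]
    linarith
  have br_half : ∀ x z, Br x z = 2 * Br ((2:ℂ)⁻¹ • x) z := by
    intro x z
    have h := key x 0 z
    rw [add_zero] at h
    rw [br_zero z, add_zero] at h
    exact h
  have br_add : ∀ x y z, Br (x + y) z = Br x z + Br y z := by
    intro x y z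
    rw [key x y z]
    exact br_half (x + y) z
  have br_addr : ∀ x z z', Br x (z + z') = Br x z + Br x z' := by
    intro x z z'
    rw [br_symm, br_add, br_symm z x, br_symm z' x]
  have br_negr : ∀ x z, Br x (-z) = - Br x z := by
    intro x z
    simp only [hBr]
    rw [show x + -z = x - z by abel, show x - -z = x + z by abel]
    ring
  have br_rat : ∀ (p : ℚ) (x z : X), Br (((p : ℝ) : ℂ) • x) z = (p : ℝ) * Br x z := by
    intro p x z
    have gadd : ∀ r s : ℝ, Br (((r + s : ℝ) : ℂ) • x) z
        = Br ((r : ℂ) • x) z + Br ((s : ℂ) • x) z := by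
      intro r s
      rw [← br_add]
      congr 1
      push_cast
      rw [add_smul]
    let G : ℝ →+ ℝ := AddMonoidHom.mk' (fun r => Br ((r : ℂ) • x) z) gadd
    have h := map_rat_smul G p 1
    have h1 : G 1 = Br x z := by
      simp only [G, AddMonoidHom.mk'_apply]
      norm_num
    have h2 : G ((p : ℝ)) = Br (((p : ℝ) : ℂ) • x) z := rfl
    rw [Rat.smul_one_eq_cast] at h
    rw [h2] at h
    rw [h, h1]
    simp [Rat.smul_def]
  have br_bound : ∀ u z, |Br u z| ≤ (q u + q z) / 2 := by
    intro u z
    have hpp := hp u z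
    have h1 := h0 (u + z)
    have h2 := h0 (u - z)
    rw [abs_le]
    constructor <;> simp only [hBr] <;> [linarith; linarith]
  have br_real : ∀ (r : ℝ) (x z : X), Br ((r : ℂ) • x) z = r * Br x z := by
    intro r x z
    have sc : ∀ (u : X) (s : ℚ), 0 < s → |Br u z| ≤ (q u + (s:ℝ)^2 * q z) / (2 * s) := by
      intro u s hs0
      have hsr : (0:ℝ) < (s:ℝ) := by exact_mod_cast hs0
      have hb := br_bound u (((s:ℝ) : ℂ) • z)
      have hq : q ((( (s:ℝ)) : ℂ) • z) = (s:ℝ)^2 * q z := by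
        rw [hs]
        congr 1
        rw [Complex.norm_real, Real.norm_eq_abs, sq_abs]
      have hbr : Br u (((s:ℝ) : ℂ) • z) = (s:ℝ) * Br u z := by
        rw [br_symm, br_rat, br_symm]
      rw [hq, hbr, abs_mul, abs_of_pos hsr] at hb
      rw [le_div_iff₀ (by positivity : (0:ℝ) < 2 * (s:ℝ))]
      nlinarith [hb]
    have gbound : ∀ a : ℝ, |Br ((a : ℂ) • x) z| ≤ |a| * (q x / 2 + q z) := by
      intro a
      rcases eq_or_ne a 0 with rfl | ha
      · simp [br_zero]
      · have hapos : 0 < |a| := abs_pos.2 ha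
        obtain ⟨s, hs1, hs2⟩ := exists_rat_btwn (show |a| < 2 * |a| by linarith)
        have hs0 : 0 < s := by
          have : (0:ℝ) < (s:ℝ) := lt_trans hapos hs1
          exact_mod_cast this
        have hb := sc ((a : ℂ) • x) s hs0
        have hq : q ((a : ℂ) • x) = a ^ 2 * q x := by
          rw [hs, Complex.norm_real, Real.norm_eq_abs, sq_abs]
        rw [hq] at hb
        have hsr : (0:ℝ) < (s:ℝ) := by exact_mod_cast hs0
        have e1 : a ^ 2 / (2 * s) ≤ |a| / 2 := by
          rw [div_le_div_iff₀ (by positivity) (by norm_num)]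
          nlinarith [sq_abs a]
        have e2 : (s:ℝ) ^ 2 / (2 * s) ≤ |a| := by
          rw [div_le_iff₀ (by positivity)]
          nlinarith
        have hqx := h0 x
        have hqz := h0 z
        calc |Br ((a : ℂ) • x) z| ≤ (a ^ 2 * q x + (s:ℝ)^2 * q z) / (2 * s) := hb
          _ = (a^2 / (2*s)) * q x + ((s:ℝ)^2/(2*s)) * q z := by ring
          _ ≤ (|a| / 2) * q x + |a| * q z := by
              apply add_le_add
              · exact mul_le_mul_of_nonneg_right e1 hqx
              · exact mul_le_mul_of_nonneg_right e2 hqz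
          _ = |a| * (q x / 2 + q z) := by ring
    -- conclusion via rational approximation
    set C := q x / 2 + q z + |Br x z| with hC
    have hC0 : 0 ≤ C := by
      have := h0 x; have := h0 z; have := abs_nonneg (Br x z); simp only [hC]; linarith
    have main : ∀ ε : ℝ, 0 < ε → |Br ((r : ℂ) • x) z - r * Br x z| ≤ ε := by
      intro ε hε
      obtain ⟨p, hp2⟩ := exists_rat_near r (show (0:ℝ) < ε / (C + 1) by positivity)
      have split : Br ((r : ℂ) • x) z = Br (((r - p : ℝ) : ℂ) • x) z + (p:ℝ) * Br x z := by
        rw [← br_rat p x z, ← br_add]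
        congr 1
        push_cast
        rw [← add_smul]
        norm_num
      rw [split]
      have hb := gbound (r - (p:ℝ))
      have : |Br (((r - p : ℝ) : ℂ) • x) z + (p:ℝ) * Br x z - r * Br x z|
          ≤ |r - (p:ℝ)| * (q x / 2 + q z) + |r - (p:ℝ)| * |Br x z| := by
        have e : Br (((r - p : ℝ) : ℂ) • x) z + (p:ℝ) * Br x z - r * Br x z
            = Br (((r - p : ℝ) : ℂ) • x) z + ((p:ℝ) - r) * Br x z := by ring
        rw [e]
        refine le_trans (abs_add_le _ _) ?_
        apply add_le_add hb
        rw [abs_mul, abs_sub_comm]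
      refine le_trans this ?_
      have e3 : |r - (p:ℝ)| * (q x / 2 + q z) + |r - (p:ℝ)| * |Br x z| = |r - (p:ℝ)| * C := by
        simp only [hC]; ring
      rw [e3]
      have : |r - (p:ℝ)| ≤ ε / (C + 1) := le_of_lt hp2
      calc |r - (p:ℝ)| * C ≤ (ε / (C + 1)) * C := by
            apply mul_le_mul_of_nonneg_right this hC0
        _ ≤ ε := by
            rw [div_mul_eq_mul_div, div_le_iff₀ (by linarith)]
            nlinarith
    have : |Br ((r : ℂ) • x) z - r * Br x z| = 0 := by
      by_contra hne
      have hpos : 0 < |Br ((r : ℂ) • x) z - r * Br x z| :=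
        lt_of_le_of_ne (abs_nonneg _) (Ne.symm hne)
      have := main (|Br ((r : ℂ) • x) z - r * Br x z| / 2) (by linarith)
      linarith
    have := abs_eq_zero.1 this
    linarith [this]
  have br_I1 : ∀ x z, Br (Complex.I • x) z = - Br x (Complex.I • z) := by
    intro x z
    have e1 : q (Complex.I • x + z) = q (x - Complex.I • z) := by
      rw [show Complex.I • x + z = Complex.I • (x - Complex.I • z) by
        rw [smul_sub, smul_smul, Complex.I_mul_I, neg_smul, one_smul, sub_neg_eq_add]]
      rw [hs]
      norm_num
    have e2 : q (Complex.I • x - z) = q (x + Complex.I • z) := by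
      rw [show Complex.I • x - z = Complex.I • (x + Complex.I • z) by
        rw [smul_add, smul_smul, Complex.I_mul_I, neg_smul, one_smul]
        abel]
      rw [hs]
      norm_num
    simp only [hBr]
    rw [e1, e2]
    ring
  have br_I2 : ∀ x z, Br (Complex.I • x) (Complex.I • z) = Br x z := by
    intro x z
    simp only [hBr]
    rw [← smul_add, ← smul_sub, hs, hs]
    norm_num
  set B : X → X → ℂ := fun x z =>
    ((Br x z : ℝ) : ℂ) + ((Br x (Complex.I • z) : ℝ) : ℂ) * Complex.I with hB
  have hI : Complex.I ^ 2 = -1 := Complex.I_sq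
  have b_add_left : ∀ x y z, B (x + y) z = B x z + B y z := by
    intro x y z
    simp only [hB, br_add]
    push_cast
    ring
  have b_add_right : ∀ x z z', B x (z + z') = B x z + B x z' := by
    intro x z z'
    simp only [hB, smul_add, br_addr]
    push_cast
    ring
  have b_real_left : ∀ (r : ℝ) x z, B ((r : ℂ) • x) z = (r : ℂ) * B x z := by
    intro r x z
    simp only [hB, br_real]
    push_cast
    ring
  have b_I_left : ∀ x z, B (Complex.I • x) z = Complex.I * B x z := by
    intro x z
    simp only [hB, br_I1]
    have h3 : Br x (Complex.I • Complex.I • z) = - Br x z := by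
      rw [smul_smul, Complex.I_mul_I, neg_smul, one_smul, br_negr]
    rw [h3]
    push_cast
    linear_combination (-((Br x (Complex.I • z) : ℝ) : ℂ)) * hI
  have b_smul_left : ∀ (c : ℂ) x z, B (c • x) z = c * B x z := by
    intro c x z
    have hdecomp : c • x = ((c.re : ℝ) : ℂ) • x + ((c.im : ℝ) : ℂ) • (Complex.I • x) := by
      rw [smul_smul, ← add_smul]
      congr 1
      exact (Complex.re_add_im c).symm
    rw [hdecomp, b_add_left, b_real_left, b_real_left, b_I_left]
    linear_combination (B x z) * (Complex.re_add_im c)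
  have b_real_right : ∀ (r : ℝ) x z, B x ((r : ℂ) • z) = (r : ℂ) * B x z := by
    intro r x z
    have h1 : Br x ((r : ℂ) • z) = r * Br x z := by
      rw [br_symm, br_real, br_symm]
    have h2 : Br x (Complex.I • ((r : ℂ) • z)) = r * Br x (Complex.I • z) := by
      rw [smul_comm, br_symm, br_real, br_symm]
    simp only [hB, h1, h2]
    push_cast
    ring
  have b_I_right : ∀ x z, B x (Complex.I • z) = - Complex.I * B x z := by
    intro x z
    have h2 : Br x (Complex.I • (Complex.I • z)) = - Br x z := by
      rw [smul_smul, Complex.I_mul_I, neg_smul, one_smul, br_negr]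
    simp only [hB, h2]
    push_cast
    linear_combination (((Br x (Complex.I • z) : ℝ) : ℂ)) * hI
  have b_smul_right : ∀ (c : ℂ) x z, B x (c • z) = (starRingEnd ℂ) c * B x z := by
    intro c x z
    have hdecomp : c • z = ((c.re : ℝ) : ℂ) • z + ((c.im : ℝ) : ℂ) • (Complex.I • z) := by
      rw [smul_smul, ← add_smul]
      congr 1
      exact (Complex.re_add_im c).symm
    have hconj : (starRingEnd ℂ) c = ((c.re : ℝ) : ℂ) - ((c.im : ℝ) : ℂ) * Complex.I := by
      simp [Complex.ext_iff]
    rw [hdecomp, b_add_right, b_real_right, b_real_right, b_I_right, hconj]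
    ring
  have b_self : ∀ x, B x x = ((q x : ℝ) : ℂ) := by
    intro x
    have h1 : Br x (Complex.I • x) = 0 := by
      have e1 : q (x + Complex.I • x) = 2 * q x := by
        rw [show x + Complex.I • x = ((1 : ℂ) + Complex.I) • x by rw [add_smul, one_smul]]
        rw [hs]
        congr 1
        rw [← Complex.normSq_eq_norm_sq, Complex.normSq_apply]
        simp
        norm_num
      have e2 : q (x - Complex.I • x) = 2 * q x := by
        rw [show x - Complex.I • x = ((1 : ℂ) - Complex.I) • x by rw [sub_smul, one_smul]]
        rw [hs]
        congr 1
        rw [← Complex.normSq_eq_norm_sq, Complex.normSq_apply]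
        simp
        norm_num
      simp only [hBr]
      rw [e1, e2]
      ring
    simp only [hB, br_self, h1]
    push_cast
    ring
  refine ⟨LinearMap.mk₂'ₛₗ (RingHom.id ℂ) (starRingEnd ℂ) B b_add_left
      (fun c x z => by simpa using b_smul_left c x z)
      (fun x z z' => b_add_right x z z')
      (fun c x z => by simpa using b_smul_right c x z), fun x => ?_⟩
  simpa using b_self x

end construction
section qq
variable {X : Type*} [AddCommGroup X] [Module ℂ X]

lemma FQ_smul_real (s : X →ₗ[ℂ] X →ₗ⋆[ℂ] ℂ) (a : ℝ) (x : X) :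
    FQ s ((a : ℂ) • x) = a ^ 2 * FQ s x := by
  rw [FQ_smul_vec, Complex.norm_real, Real.norm_eq_abs, sq_abs]

lemma qq_bddBelow {t w : X →ₗ[ℂ] X →ₗ⋆[ℂ] ℂ} (ht : IsNNForm t) (hw : IsNNForm w)
    {c : ℝ} (hc : 0 ≤ c) (x : X) :
    BddBelow (Set.range fun y : X => FQ t (x - y) + c * FQ w y) := by
  refine ⟨0, ?_⟩
  rintro r ⟨y, rfl⟩
  exact add_nonneg (FQ_nonneg ht _) (mul_nonneg hc (FQ_nonneg hw _))

lemma qq_nonneg {t w : X →ₗ[ℂ] X →ₗ⋆[ℂ] ℂ} (ht : IsNNForm t) (hw : IsNNForm w)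
    {c : ℝ} (hc : 0 ≤ c) (x : X) :
    0 ≤ ⨅ y : X, (FQ t (x - y) + c * FQ w y) :=
  le_ciInf fun y => add_nonneg (FQ_nonneg ht _) (mul_nonneg hc (FQ_nonneg hw _))

lemma qq_le_t {t w : X →ₗ[ℂ] X →ₗ⋆[ℂ] ℂ} (ht : IsNNForm t) (hw : IsNNForm w)
    {c : ℝ} (hc : 0 ≤ c) (x : X) :
    (⨅ y : X, (FQ t (x - y) + c * FQ w y)) ≤ FQ t x := by
  have := ciInf_le (qq_bddBelow ht hw hc x) (0 : X)
  simpa [FQ_zero] using this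

lemma qq_le_cw {t w : X →ₗ[ℂ] X →ₗ⋆[ℂ] ℂ} (ht : IsNNForm t) (hw : IsNNForm w)
    {c : ℝ} (hc : 0 ≤ c) (x : X) :
    (⨅ y : X, (FQ t (x - y) + c * FQ w y)) ≤ c * FQ w x := by
  have := ciInf_le (qq_bddBelow ht hw hc x) x
  simpa [FQ_zero] using this

lemma qq_lower {t w : X →ₗ[ℂ] X →ₗ⋆[ℂ] ℂ} (hw : IsNNForm w) (hwt : FLe w t)
    {c : ℝ} (hc : 0 < c) (x : X) :
    c / (c + 1) * FQ w x ≤ ⨅ y : X, (FQ t (x - y) + c * FQ w y) := by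
  refine le_ciInf fun y => ?_
  have hub := FQ_add_le hw (x - y) y (show (0:ℝ) < c⁻¹ by positivity)
  rw [sub_add_cancel, inv_inv] at hub
  have h1 := hwt (x - y)
  have h2 : c * (1 + c⁻¹) = c + 1 := by field_simp
  rw [div_mul_eq_mul_div, div_le_iff₀ (by positivity)]
  have hub' := mul_le_mul_of_nonneg_left hub hc.le
  nlinarith [FQ_nonneg hw y, FQ_nonneg hw (x - y)]

lemma qq_upper {t w : X →ₗ[ℂ] X →ₗ⋆[ℂ] ℂ} (ht : IsNNForm t) (hw : IsNNForm w) (hwt : FLe w t)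
    {c : ℝ} (hc : 0 < c) (x : X) :
    (⨅ y : X, (FQ t (x - y) + c * FQ w y)) ≤ c / (c + 1) * FQ t x := by
  have h1 : (0:ℝ) < c + 1 := by linarith
  set a : ℝ := 1 / (c + 1) with ha
  have hxy : x - ((a : ℝ) : ℂ) • x = (((1 - a : ℝ)) : ℂ) • x := by
    push_cast
    rw [sub_smul, one_smul]
  refine le_trans (ciInf_le (qq_bddBelow ht hw hc.le x) (((a : ℝ) : ℂ) • x)) ?_
  rw [hxy, FQ_smul_real, FQ_smul_real]
  have e : (1 - a) ^ 2 + c * a ^ 2 = c / (c + 1) := by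
    rw [ha]
    field_simp
    ring
  have h3 := mul_le_mul_of_nonneg_left (hwt x) (show (0:ℝ) ≤ c * a ^ 2 by positivity)
  have h4 := FQ_nonneg ht x
  nlinarith [h3, h4]

lemma le_of_ratio {A B : ℝ} (hB : 0 ≤ B)
    (h : ∀ n : ℕ, 1 ≤ n → A ≤ ((n : ℝ) + 1) / n * B) : A ≤ B := by
  by_contra hlt
  push_neg at hlt
  obtain ⟨n, hn⟩ := exists_nat_gt (max 1 (B / (A - B)))
  have hn1 : 1 ≤ n := by
    have h1 : (1:ℝ) ≤ max 1 (B / (A - B)) := le_max_left _ _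
    have h2 := h1.trans hn.le
    exact_mod_cast h2
  have hnr : (1:ℝ) ≤ (n:ℝ) := by exact_mod_cast hn1
  have hnp : (0:ℝ) < n := by linarith
  have hABpos : (0:ℝ) < A - B := by linarith
  have hd : B / (A - B) < n := lt_of_le_of_lt (le_max_right _ _) hn
  have hBn : B < (n:ℝ) * (A - B) := by rwa [div_lt_iff₀ hABpos] at hd
  have h2 := h n hn1
  have he : ((n:ℝ) + 1) / n * B = B + B / n := by field_simp
  rw [he] at h2
  have h3 : B / (n:ℝ) < A - B := by
    rw [div_lt_iff₀ hnp]
    nlinarith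
  linarith

end qq

set_option maxHeartbeats 1000000 in
theorem quasi_unit_iff_extreme_point_forms
    {X : Type*} [AddCommGroup X] [Module ℂ X]
    (t w : X →ₗ[ℂ] X →ₗ⋆[ℂ] ℂ) (ht : IsNNForm t) (hw : IsNNForm w) (hwt : FLe w t) :
    (∀ x : X, FQ w x = ⨆ n : ℕ, ⨅ y : X, (FQ t (x - y) + (n : ℝ) * FQ w y)) ↔
      w ∈ Set.extremePoints ℝ {s : X →ₗ[ℂ] X →ₗ⋆[ℂ] ℂ | IsNNForm s ∧ FLe s t} := by
  classical
  have bddA : ∀ z : X, BddAbove (Set.range fun m : ℕ =>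
      ⨅ y : X, (FQ t (z - y) + (m : ℝ) * FQ w y)) := by
    intro z
    refine ⟨FQ t z, ?_⟩
    rintro r ⟨m, rfl⟩
    exact qq_le_t ht hw (by positivity) z
  constructor
  · -- quasi-unit → extreme point
    intro hq
    rw [mem_extremePoints]
    refine ⟨⟨hw, hwt⟩, ?_⟩
    intro u hu v hv hseg
    obtain ⟨a, b, ha, hb, hab, habc⟩ := hseg
    have hcomb : ∀ z, FQ w z = a * FQ u z + b * FQ v z := by
      intro z
      rw [← habc]
      simp [FQ, LinearMap.add_apply, LinearMap.smul_apply, Complex.add_re, Complex.real_smul,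
        Complex.re_ofReal_mul]
    -- any member s of the set dominated by a multiple of w satisfies s ≤ w
    have half : ∀ s : X →ₗ[ℂ] X →ₗ⋆[ℂ] ℂ, IsNNForm s → FLe s t →
        ∀ c : ℝ, 0 < c → (∀ z, c * FQ s z ≤ FQ w z) → ∀ z, FQ s z ≤ FQ w z := by
      intro s hs hst c hc hdom z
      refine le_of_ratio (FQ_nonneg hw z) ?_
      intro n hn1
      have hnr : (1:ℝ) ≤ (n:ℝ) := by exact_mod_cast hn1
      have hnp : (0:ℝ) < (n:ℝ) := by linarith
      have s1 : (n:ℝ) / ((n:ℝ) + 1) * FQ s z ≤ ⨅ y : X, (FQ t (z - y) + (n:ℝ) * FQ s y) :=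
        qq_lower hs hst hnp z
      set m : ℕ := ⌈(n:ℝ) * c⁻¹⌉₊ with hm
      have s2 : (⨅ y : X, (FQ t (z - y) + (n:ℝ) * FQ s y))
          ≤ ⨅ y : X, (FQ t (z - y) + (m:ℝ) * FQ w y) := by
        apply ciInf_mono (qq_bddBelow ht hs (by positivity) z)
        intro y
        have h1 := hdom y
        have h2 : (n:ℝ) * c⁻¹ ≤ (m:ℝ) := Nat.le_ceil _
        have h3 : (n:ℝ) * FQ s y ≤ (m:ℝ) * FQ w y := by
          have h5 := FQ_nonneg hw y
          have hA : FQ s y ≤ FQ w y / c := by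
            rw [le_div_iff₀ hc]
            linarith [h1]
          calc (n:ℝ) * FQ s y ≤ (n:ℝ) * (FQ w y / c) :=
                mul_le_mul_of_nonneg_left hA hnp.le
            _ = ((n:ℝ) * c⁻¹) * FQ w y := by field_simp
            _ ≤ (m:ℝ) * FQ w y := mul_le_mul_of_nonneg_right h2 h5
        linarith
      have s3 : (⨅ y : X, (FQ t (z - y) + (m:ℝ) * FQ w y)) ≤ FQ w z := by
        rw [hq z]
        exact le_ciSup (bddA z) m
      have e : ((n:ℝ) + 1) / n * ((n:ℝ) / ((n:ℝ) + 1) * FQ s z) = FQ s z := by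
        field_simp
      calc FQ s z = ((n:ℝ) + 1) / n * ((n:ℝ) / ((n:ℝ) + 1) * FQ s z) := e.symm
        _ ≤ ((n:ℝ) + 1) / n * (⨅ y : X, (FQ t (z - y) + (n:ℝ) * FQ s y)) :=
            mul_le_mul_of_nonneg_left s1 (by positivity)
        _ ≤ ((n:ℝ) + 1) / n * FQ w z :=
            mul_le_mul_of_nonneg_left (s2.trans s3) (by positivity)
    have hu1 : ∀ z, FQ u z ≤ FQ w z := by
      refine half u hu.1 hu.2 a ha fun z => ?_
      have h1 := hcomb z
      have h2 := mul_nonneg hb.le (FQ_nonneg hv.1 z)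
      linarith
    have hv1 : ∀ z, FQ v z ≤ FQ w z := by
      refine half v hv.1 hv.2 b hb fun z => ?_
      have h1 := hcomb z
      have h2 := mul_nonneg ha.le (FQ_nonneg hu.1 z)
      linarith
    have hueq : ∀ z, FQ u z = FQ w z := by
      intro z
      have h1 := hcomb z
      have h2 := hu1 z
      have h3 := hv1 z
      have e1 : a * (FQ w z - FQ u z) + b * (FQ w z - FQ v z) = 0 := by
        linear_combination (FQ w z) * hab + h1
      nlinarith [mul_nonneg ha.le (sub_nonneg.2 h2), mul_nonneg hb.le (sub_nonneg.2 h3)]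
    have hveq : ∀ z, FQ v z = FQ w z := by
      intro z
      have h1 := hcomb z
      have h2 := hu1 z
      have h3 := hv1 z
      have e1 : a * (FQ w z - FQ u z) + b * (FQ w z - FQ v z) = 0 := by
        linear_combination (FQ w z) * hab + h1
      nlinarith [mul_nonneg ha.le (sub_nonneg.2 h2), mul_nonneg hb.le (sub_nonneg.2 h3)]
    constructor
    · have hz : ∀ z, (u - w) z z = 0 := by
        intro z
        simp [LinearMap.sub_apply, diag_eq_FQ hu.1, diag_eq_FQ hw, hueq z]
      exact sub_eq_zero.1 (form_eq_zero_of_diag hz)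
    · have hz : ∀ z, (v - w) z z = 0 := by
        intro z
        simp [LinearMap.sub_apply, diag_eq_FQ hv.1, diag_eq_FQ hw, hveq z]
      exact sub_eq_zero.1 (form_eq_zero_of_diag hz)
  · -- extreme point → quasi-unit
    intro hext
    rw [mem_extremePoints] at hext
    intro x
    have hS0 : 0 ≤ ⨆ n : ℕ, ⨅ y : X, (FQ t (x - y) + (n : ℝ) * FQ w y) := by
      have h1 : (⨅ y : X, (FQ t (x - y) + ((0:ℕ) : ℝ) * FQ w y))
          ≤ ⨆ n : ℕ, ⨅ y : X, (FQ t (x - y) + (n : ℝ) * FQ w y) := le_ciSup (bddA x) 0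
      have h2 := qq_nonneg ht hw (show (0:ℝ) ≤ ((0:ℕ):ℝ) by norm_num) x
      linarith
    refine le_antisymm ?_ ?_
    · refine le_of_ratio hS0 fun n hn1 => ?_
      have hnr : (1:ℝ) ≤ (n:ℝ) := by exact_mod_cast hn1
      have hnp : (0:ℝ) < (n:ℝ) := by linarith
      have s1 := qq_lower hw hwt hnp x
      have s2 : (⨅ y : X, (FQ t (x - y) + (n:ℝ) * FQ w y))
          ≤ ⨆ n : ℕ, ⨅ y : X, (FQ t (x - y) + (n : ℝ) * FQ w y) := le_ciSup (bddA x) n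
      have e : ((n:ℝ) + 1) / n * ((n:ℝ) / ((n:ℝ) + 1) * FQ w x) = FQ w x := by
        field_simp
      calc FQ w x = ((n:ℝ) + 1) / n * ((n:ℝ) / ((n:ℝ) + 1) * FQ w x) := e.symm
        _ ≤ ((n:ℝ) + 1) / n * ⨆ n : ℕ, ⨅ y : X, (FQ t (x - y) + (n : ℝ) * FQ w y) :=
            mul_le_mul_of_nonneg_left (s1.trans s2) (by positivity)
    · by_contra hcon
      push_neg at hcon
      obtain ⟨n, hn⟩ := exists_lt_of_lt_ciSup hcon
      have hn0 : n ≠ 0 := by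
        rintro rfl
        have h1 := qq_le_cw ht hw (show (0:ℝ) ≤ ((0:ℕ):ℝ) by norm_num) x
        have h2 := FQ_nonneg hw x
        simp only [Nat.cast_zero, zero_mul, add_zero] at h1 hn
        linarith
      have hn1 : 1 ≤ n := Nat.one_le_iff_ne_zero.2 hn0
      set k : ℝ := (n : ℝ) with hk
      have hkr : (1:ℝ) ≤ k := by rw [hk]; exact_mod_cast hn1
      have hkp : (0:ℝ) < k := by linarith
      set q : X → ℝ := fun z => ⨅ y : X, (FQ t (z - y) + k * FQ w y) with hqdef
      have hnq : FQ w x < q x := hn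
      have h0 : ∀ z, 0 ≤ q z := fun z => qq_nonneg ht hw hkp.le z
      have haux : ∀ (c : ℂ) (z : X), c ≠ 0 → q (c • z) ≤ ‖c‖ ^ 2 * q z := by
        intro c z hc
        have hpos : (0:ℝ) < ‖c‖ ^ 2 := pow_pos (norm_pos_iff.mpr hc) 2
        rw [hqdef]
        simp only
        rw [mul_comm, ← div_le_iff₀ hpos]
        refine le_ciInf fun y => ?_
        rw [div_le_iff₀ hpos]
        have h1 := ciInf_le (qq_bddBelow ht hw hkp.le (c • z)) (c • y)
        rw [← smul_sub, FQ_smul_vec, FQ_smul_vec] at h1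
        calc (⨅ y : X, (FQ t (c • z - y) + k * FQ w y))
            ≤ ‖c‖ ^ 2 * FQ t (z - y) + k * (‖c‖ ^ 2 * FQ w y) := h1
          _ = (FQ t (z - y) + k * FQ w y) * ‖c‖ ^ 2 := by ring
      have hq0 : q 0 = 0 := by
        refine le_antisymm ?_ (h0 0)
        have h1 := qq_le_cw ht hw hkp.le (0 : X)
        rw [FQ_zero, mul_zero] at h1
        exact h1
      have hsq : ∀ (c : ℂ) (z : X), q (c • z) = ‖c‖ ^ 2 * q z := by
        intro c z
        rcases eq_or_ne c 0 with rfl | hc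
        · rw [zero_smul, hq0, norm_zero]
          norm_num
        · refine le_antisymm (haux c z hc) ?_
          have h2 := haux c⁻¹ (c • z) (inv_ne_zero hc)
          rw [inv_smul_smul₀ hc, norm_inv, inv_pow] at h2
          have h3 := mul_le_mul_of_nonneg_left h2
            (le_of_lt (pow_pos (norm_pos_iff.mpr hc) 2))
          calc ‖c‖ ^ 2 * q z ≤ ‖c‖ ^ 2 * ((‖c‖ ^ 2)⁻¹ * q (c • z)) := h3
            _ = q (c • z) := by
                rw [← mul_assoc, mul_inv_cancel₀ (ne_of_gt (pow_pos (norm_pos_iff.mpr hc) 2)),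
                  one_mul]
      have hple : ∀ u v : X, q (u + v) + q (u - v) ≤ 2 * q u + 2 * q v := by
        intro u v
        refine le_of_forall_pos_le_add fun ε hε => ?_
        obtain ⟨y1, hy1⟩ := exists_lt_of_ciInf_lt
          (show (⨅ y : X, (FQ t (u - y) + k * FQ w y)) < q u + ε / 4 by
            have : q u < q u + ε / 4 := by linarith
            exact this)
        obtain ⟨y2, hy2⟩ := exists_lt_of_ciInf_lt
          (show (⨅ y : X, (FQ t (v - y) + k * FQ w y)) < q v + ε / 4 by
            have : q v < q v + ε / 4 := by linarith
            exact this)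
        have i1 : q (u + v) ≤ FQ t (u + v - (y1 + y2)) + k * FQ w (y1 + y2) :=
          ciInf_le (qq_bddBelow ht hw hkp.le _) _
        have i2 : q (u - v) ≤ FQ t (u - v - (y1 - y2)) + k * FQ w (y1 - y2) :=
          ciInf_le (qq_bddBelow ht hw hkp.le _) _
        rw [show u + v - (y1 + y2) = (u - y1) + (v - y2) by abel] at i1
        rw [show u - v - (y1 - y2) = (u - y1) - (v - y2) by abel] at i2
        have p1 := FQ_parallelogram t (u - y1) (v - y2)
        have p2 := FQ_parallelogram w y1 y2
        have p2' := congrArg (fun r => k * r) p2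
        simp only [mul_add] at p2'
        linarith
      have hpq : ∀ u v : X, q (u + v) + q (u - v) = 2 * q u + 2 * q v := by
        intro u v
        refine le_antisymm (hple u v) ?_
        have h3 := hple (u + v) (u - v)
        have e3 : q ((u + v) + (u - v)) = 4 * q u := by
          rw [show (u + v) + (u - v) = (2:ℂ) • u by module, hsq]
          norm_num
        have e4 : q ((u + v) - (u - v)) = 4 * q v := by
          rw [show (u + v) - (u - v) = (2:ℂ) • v by module, hsq]
          norm_num
        linarith
      obtain ⟨p, hpdiag⟩ := exists_form_of_quadratic q h0 hsq hpq
      have diagcomb : ∀ (α β : ℝ) (z : X),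
          (α • w + β • p) z z = ((α * FQ w z + β * q z : ℝ) : ℂ) := by
        intro α β z
        simp only [LinearMap.add_apply, LinearMap.smul_apply, diag_eq_FQ hw, hpdiag,
          Complex.real_smul]
        push_cast
        ring
      have FQcomb : ∀ (α β : ℝ) (z : X), FQ (α • w + β • p) z = α * FQ w z + β * q z := by
        intro α β z
        rw [FQ, diagcomb]
        exact Complex.ofReal_re _
      set c2 : ℝ := (k + 1) / k ^ 2 with hc2
      have hql : ∀ z, k / (k + 1) * FQ w z ≤ q z := fun z => qq_lower hw hwt hkp z
      have hqu : ∀ z, q z ≤ k / (k + 1) * FQ t z := fun z => qq_upper ht hw hwt hkp z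
      have hqw : ∀ z, q z ≤ k * FQ w z := fun z => qq_le_cw ht hw hkp.le z
      have hc2k : c2 * k = 1 + k⁻¹ := by rw [hc2]; field_simp
      have hc2l : c2 * (k / (k + 1)) = k⁻¹ := by rw [hc2]; field_simp
      have hc2p : (0:ℝ) < c2 := by rw [hc2]; positivity
      have hkfr : k / (k + 1) ≤ 1 := by
        rw [div_le_one (by linarith)]
        linarith
      have hki : 0 < k⁻¹ := by positivity
      have hki1 : k⁻¹ ≤ 1 := by
        rw [inv_le_one_iff₀]
        right
        exact hkr
      have humem : (1 + k⁻¹) • w + (-c2) • p ∈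
          {s : X →ₗ[ℂ] X →ₗ⋆[ℂ] ℂ | IsNNForm s ∧ FLe s t} := by
        constructor
        · intro z
          rw [diagcomb, Complex.zero_le_real]
          have h1 := hqw z
          have h2 := mul_le_mul_of_nonneg_left h1 hc2p.le
          have h3 := congrArg (· * FQ w z) hc2k
          linarith
        · intro z
          rw [FQcomb]
          have h1 := mul_le_mul_of_nonneg_left (hql z) hc2p.le
          have h2 := congrArg (· * FQ w z) hc2l
          have h3 := hwt z
          linarith
      have hvmem : (1 - k⁻¹) • w + c2 • p ∈
          {s : X →ₗ[ℂ] X →ₗ⋆[ℂ] ℂ | IsNNForm s ∧ FLe s t} := by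
        constructor
        · intro z
          rw [diagcomb, Complex.zero_le_real]
          have h1 := FQ_nonneg hw z
          have h2 := h0 z
          nlinarith [hc2p, hki1]
        · intro z
          rw [FQcomb]
          have h1 := mul_le_mul_of_nonneg_left (hqu z) hc2p.le
          have h2 := congrArg (· * FQ t z) hc2l
          have h3 := hwt z
          have h4 := FQ_nonneg ht z
          have h5 := FQ_nonneg hw z
          nlinarith [hki1, hki]
      have hseg : w ∈ openSegment ℝ ((1 + k⁻¹) • w + (-c2) • p) ((1 - k⁻¹) • w + c2 • p) := by
        refine ⟨1/2, 1/2, by norm_num, by norm_num, by norm_num, ?_⟩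
        module
      obtain ⟨hu'w, -⟩ := hext.2 _ humem _ hvmem hseg
      have hfq := congrArg (fun s => FQ s x) hu'w
      rw [FQcomb] at hfq
      -- (1 + k⁻¹) * W + (-c2) * Q = W, with W < Q, Q ≥ 0 : contradiction
      have hA := congrArg (· * q x) hc2l
      have hB := mul_le_mul_of_nonneg_left (mul_le_mul_of_nonneg_right hkfr (h0 x)) hc2p.le
      -- c2 * (k/(k+1) * Q) ≤ c2 * Q ... we need c2*Q ≥ k⁻¹ * Q
      have hC : k⁻¹ * q x ≤ c2 * q x := by
        have h6 := mul_le_mul_of_nonneg_left (mul_le_mul_of_nonneg_right hkfr (h0 x)) hc2p.le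
        nlinarith [hA, hc2p, h0 x]
      have hD := mul_lt_mul_of_pos_left hnq hki
      linarith
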